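/- Let B ∈ ℂ^{n×k} have rank k with unique orthonormal polar factor P_*, and let P ∈ ℂ^{n×k} have orthonormal columns with R(P) = R(P_*). Let η = ‖B‖_tr − Re(tr(Pᴴ B)). Then ‖P − P_*‖_F ≤ √(2η / σ_min(B)). -/

import Mathlib

open scoped ComplexOrder
open Matrix

/-- The tuple `f` rearranged into decreasing order; `sortedDesc f 0` is the largest entry. -/
noncomputable def sortedDesc {m : ℕ} (f : Fin m → ℝ) : Fin m → ℝ :=
  fun i => (f ∘ Tuple.sort f) i.rev

/-- The singular values of a complex matrix, in decreasing order. -/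
noncomputable def sv {n k : ℕ} (B : Matrix (Fin n) (Fin k) ℂ) : Fin k → ℝ :=
  sortedDesc fun i =>
    Real.sqrt ((Matrix.posSemidef_conjTranspose_mul_self B).isHermitian.eigenvalues i)

/-- The trace (nuclear) norm: the sum of the singular values. -/
noncomputable def trNorm {n k : ℕ} (B : Matrix (Fin n) (Fin k) ℂ) : ℝ := ∑ i, sv B i

/-- The Frobenius norm. -/
noncomputable def frobNorm {n k : ℕ} (A : Matrix (Fin n) (Fin k) ℂ) : ℝ :=
  Real.sqrt (∑ i, ∑ j, ‖A i j‖ ^ 2)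

/-- `‖sin Θ(R(X), R(Y))‖_F` where `Θ` is the diagonal matrix of canonical angles
`θ_i = arccos σ_i(Xᴴ Y)` between the column spaces of `X` and `Y`. -/
noncomputable def sinThetaF {n k : ℕ} (X Y : Matrix (Fin n) (Fin k) ℂ) : ℝ :=
  Real.sqrt (∑ i, Real.sin (Real.arccos (sv (Xᴴ * Y) i)) ^ 2)

/-- The smallest singular value. -/
noncomputable def smin {n k : ℕ} (B : Matrix (Fin n) (Fin k) ℂ) : ℝ := ⨅ i, sv B i

/-- The spectral norm (largest singular value). -/
noncomputable def s2norm {n k : ℕ} (B : Matrix (Fin n) (Fin k) ℂ) : ℝ := ⨆ i, sv B i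

/-- The orthonormal polar factor `B (Bᴴ B)^{-1/2}` (for `B` of full column rank). -/
noncomputable def polarFactor {n k : ℕ} (B : Matrix (Fin n) (Fin k) ℂ) :
    Matrix (Fin n) (Fin k) ℂ :=
  B * (((Matrix.posSemidef_conjTranspose_mul_self B).isHermitian.eigenvectorUnitary :
      Matrix (Fin k) (Fin k) ℂ) *
    Matrix.diagonal ((↑) ∘ (fun x : ℝ => Real.sqrt x) ∘
      (Matrix.posSemidef_conjTranspose_mul_self B).isHermitian.eigenvalues) *
    (star (Matrix.posSemidef_conjTranspose_mul_self B).isHermitian.eigenvectorUnitary :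
      Matrix (Fin k) (Fin k) ℂ))⁻¹

/-- Eigenvalues of a Hermitian matrix, in decreasing order. -/
noncomputable def eigsDesc {n : ℕ} {H : Matrix (Fin n) (Fin n) ℂ} (hH : H.IsHermitian) :
    Fin n → ℝ :=
  sortedDesc hH.eigenvalues

/-! ### Auxiliary lemmas -/

/-- The square root of a PSD matrix via the spectral decomposition. -/
noncomputable def psdSqrt {m : ℕ} {A : Matrix (Fin m) (Fin m) ℂ} (hA : A.PosSemidef) :
    Matrix (Fin m) (Fin m) ℂ :=
  (hA.isHermitian.eigenvectorUnitary : Matrix (Fin m) (Fin m) ℂ) *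
    Matrix.diagonal ((↑) ∘ (fun x : ℝ => Real.sqrt x) ∘ hA.isHermitian.eigenvalues) *
    (star hA.isHermitian.eigenvectorUnitary : Matrix (Fin m) (Fin m) ℂ)

lemma psdSqrt_posSemidef {m : ℕ} {A : Matrix (Fin m) (Fin m) ℂ} (hA : A.PosSemidef) :
    (psdSqrt hA).PosSemidef := by
  have hd : Matrix.PosSemidef (Matrix.diagonal
      ((↑) ∘ (fun x : ℝ => Real.sqrt x) ∘ hA.isHermitian.eigenvalues : Fin m → ℂ)) :=
    Matrix.PosSemidef.diagonal fun i => by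
      simp [Complex.zero_le_real, Real.sqrt_nonneg]
  have := hd.mul_mul_conjTranspose_same
    (hA.isHermitian.eigenvectorUnitary : Matrix (Fin m) (Fin m) ℂ)
  unfold psdSqrt
  rw [Matrix.star_eq_conjTranspose]
  exact this

lemma psdSqrt_mul_self {m : ℕ} {A : Matrix (Fin m) (Fin m) ℂ} (hA : A.PosSemidef) :
    psdSqrt hA * psdSqrt hA = A := by
  set U : Matrix (Fin m) (Fin m) ℂ := (hA.isHermitian.eigenvectorUnitary : Matrix (Fin m) (Fin m) ℂ) with hU
  set S : Matrix (Fin m) (Fin m) ℂ := (star hA.isHermitian.eigenvectorUnitary :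
    Matrix (Fin m) (Fin m) ℂ) with hS
  set D : Matrix (Fin m) (Fin m) ℂ := Matrix.diagonal
      ((↑) ∘ (fun x : ℝ => Real.sqrt x) ∘ hA.isHermitian.eigenvalues) with hD
  have hSU : S * U = 1 := Unitary.coe_star_mul_self _
  have hDD : D * D = Matrix.diagonal (fun i => ((hA.isHermitian.eigenvalues i : ℝ) : ℂ)) := by
    rw [hD, Matrix.diagonal_mul_diagonal]
    congr 1
    funext i
    simp only [Function.comp_apply]
    rw [← Complex.ofReal_mul, Real.mul_self_sqrt (hA.eigenvalues_nonneg i)]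
  calc psdSqrt hA * psdSqrt hA = U * (D * (S * U) * D) * S := by
        simp only [psdSqrt, hU, hS, hD, Matrix.mul_assoc]
    _ = U * (D * D) * S := by rw [hSU, Matrix.mul_one]
    _ = A := by
        rw [hDD]
        exact (hA.isHermitian.spectral_theorem.trans (Unitary.conjStarAlgAut_apply _ _)).symm

lemma psd_exists_eq_conjTranspose_mul_self {m : ℕ} {A : Matrix (Fin m) (Fin m) ℂ}
    (hA : A.PosSemidef) : ∃ C : Matrix (Fin m) (Fin m) ℂ, A = Cᴴ * C :=
  ⟨psdSqrt hA, by rw [(psdSqrt_posSemidef hA).1, psdSqrt_mul_self]⟩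

lemma trace_cTc_re {a b : ℕ} (X : Matrix (Fin a) (Fin b) ℂ) :
    (Matrix.trace (Xᴴ * X)).re = ∑ i, ∑ j, ‖X i j‖ ^ 2 := by
  rw [Finset.sum_comm]
  simp only [Matrix.trace, Matrix.diag, Matrix.mul_apply, Matrix.conjTranspose_apply,
    Complex.re_sum]
  congr 1; ext j; congr 1; ext i
  rw [mul_comm]
  rw [show star (X i j) = (starRingEnd ℂ) (X i j) from rfl, Complex.mul_conj']
  simp [Complex.normSq_eq_norm_sq, ← Complex.ofReal_pow]

lemma trace_cTc_re_nonneg {a b : ℕ} (X : Matrix (Fin a) (Fin b) ℂ) :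
    0 ≤ (Matrix.trace (Xᴴ * X)).re := by
  rw [trace_cTc_re]
  positivity

lemma trace_sqrt_eq {m : ℕ} {A : Matrix (Fin m) (Fin m) ℂ} (hA : A.PosSemidef) :
    Matrix.trace (psdSqrt hA) = ∑ i, (Real.sqrt (hA.1.eigenvalues i) : ℂ) := by
  rw [psdSqrt, Matrix.trace_mul_cycle]
  have hU : (star hA.1.eigenvectorUnitary.1 : Matrix (Fin m) (Fin m) ℂ) *
      hA.1.eigenvectorUnitary.1 = 1 := Unitary.coe_star_mul_self _
  rw [hU, Matrix.one_mul, Matrix.trace_diagonal]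
  rfl

lemma posDef_of_rank {n k : ℕ} (B : Matrix (Fin n) (Fin k) ℂ) (hrank : B.rank = k) :
    (Bᴴ * B).PosDef := by
  refine Matrix.posDef_iff_dotProduct_mulVec.mpr ⟨(Matrix.posSemidef_conjTranspose_mul_self B).1, fun x hx => ?_⟩
  have hinj : LinearMap.ker (Matrix.mulVecLin B) = ⊥ := by
    have h1 := LinearMap.finrank_range_add_finrank_ker (Matrix.mulVecLin B)
    rw [Matrix.rank] at hrank
    rw [hrank] at h1
    simp only [Module.finrank_fintype_fun_eq_card, Fintype.card_fin] at h1
    have : Module.finrank ℂ (LinearMap.ker (Matrix.mulVecLin B)) = 0 := by omega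
    exact Submodule.finrank_eq_zero.mp this
  have hBx : B *ᵥ x ≠ 0 := by
    intro h
    apply hx
    have : x ∈ LinearMap.ker (Matrix.mulVecLin B) := h
    rwa [hinj, Submodule.mem_bot] at this
  have : star x ⬝ᵥ (Bᴴ * B) *ᵥ x = star (B *ᵥ x) ⬝ᵥ (B *ᵥ x) := by
    rw [← Matrix.mulVec_mulVec, Matrix.dotProduct_mulVec, Matrix.star_mulVec,
      ← Matrix.dotProduct_mulVec]
  rw [this]
  exact Matrix.dotProduct_star_self_pos_iff.mpr hBx

lemma trace_psd_mul_psd_re_nonneg {m : ℕ} {M A : Matrix (Fin m) (Fin m) ℂ}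
    (hM : M.PosSemidef) (hA : A.PosSemidef) : 0 ≤ (Matrix.trace (M * A)).re := by
  obtain ⟨C, rfl⟩ := psd_exists_eq_conjTranspose_mul_self hM
  obtain ⟨D, rfl⟩ := psd_exists_eq_conjTranspose_mul_self hA
  have key : Cᴴ * C * (Dᴴ * D) = Cᴴ * (C * Dᴴ * D) := by simp [Matrix.mul_assoc]
  rw [key, Matrix.trace_mul_comm]
  have key2 : C * Dᴴ * D * Cᴴ = (D * Cᴴ)ᴴ * (D * Cᴴ) := by
    simp [Matrix.conjTranspose_mul, Matrix.mul_assoc]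
  rw [key2]
  exact trace_cTc_re_nonneg _

lemma sum_sortedDesc {m : ℕ} (f : Fin m → ℝ) :
    ∑ i, (f ∘ Tuple.sort f) (Fin.rev i) = ∑ i, f i := by
  rw [← Equiv.sum_comp (Fin.revPerm.trans (Tuple.sort f)) f]
  rfl

lemma smin_le {n k : ℕ} (hk : 0 < k) (B : Matrix (Fin n) (Fin k) ℂ) (i : Fin k) :
    smin B ≤ Real.sqrt
      ((Matrix.posSemidef_conjTranspose_mul_self B).isHermitian.eigenvalues i) := by
  haveI : Nonempty (Fin k) := ⟨⟨0, hk⟩⟩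
  set f : Fin k → ℝ := fun i =>
    Real.sqrt ((Matrix.posSemidef_conjTranspose_mul_self B).isHermitian.eigenvalues i) with hf
  have : sv B (((Tuple.sort f).symm i).rev) = f i := by
    simp [sv, sortedDesc, Fin.rev_rev, ← hf]
  calc smin B ≤ sv B (((Tuple.sort f).symm i).rev) :=
        ciInf_le (Set.finite_range _).bddBelow _
    _ = f i := this

lemma smin_pos {n k : ℕ} (hk : 0 < k) (B : Matrix (Fin n) (Fin k) ℂ)
    (hpos : ∀ i, 0 < (Matrix.posSemidef_conjTranspose_mul_self B).isHermitian.eigenvalues i) :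
    0 < smin B := by
  haveI : Nonempty (Fin k) := ⟨⟨0, hk⟩⟩
  have hsv : ∀ j, 0 < sv B j := fun j => Real.sqrt_pos.mpr (hpos _)
  obtain ⟨j₀, _, hj₀⟩ := Finset.exists_min_image Finset.univ (sv B) ⟨⟨0, hk⟩, Finset.mem_univ _⟩
  exact lt_of_lt_of_le (hsv j₀) (le_ciInf fun i => hj₀ i (Finset.mem_univ i))

lemma sqrt_sub_smul_posSemidef {m : ℕ} {A : Matrix (Fin m) (Fin m) ℂ} (hA : A.PosSemidef)
    {σ : ℝ} (hσ : ∀ i, σ ≤ Real.sqrt (hA.1.eigenvalues i)) :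
    (psdSqrt hA - (σ : ℂ) • 1).PosSemidef := by
  set U : Matrix (Fin m) (Fin m) ℂ := hA.1.eigenvectorUnitary.1 with hU
  have hUs : U * (star hA.1.eigenvectorUnitary.1 : Matrix (Fin m) (Fin m) ℂ) = 1 :=
    Unitary.coe_mul_star_self _
  have key : psdSqrt hA - (σ : ℂ) • 1 =
      U * (diagonal (fun i => ((Real.sqrt (hA.1.eigenvalues i) - σ : ℝ) : ℂ))) *
        (star hA.1.eigenvectorUnitary.1 : Matrix (Fin m) (Fin m) ℂ) := by
    rw [psdSqrt]
    have h1 : ((σ : ℂ) • (1 : Matrix (Fin m) (Fin m) ℂ)) =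
        U * ((σ : ℂ) • 1) * (star hA.1.eigenvectorUnitary.1 : Matrix (Fin m) (Fin m) ℂ) := by
      rw [Matrix.mul_smul, Matrix.mul_one, Matrix.smul_mul, hUs]
    rw [h1, ← Matrix.sub_mul, ← Matrix.mul_sub]
    congr 1
    rw [Matrix.smul_one_eq_diagonal, diagonal_sub]
    congr 1
    ext i
    push_cast
    rfl
  rw [key]
  have hd : Matrix.PosSemidef
      (diagonal (fun i => ((Real.sqrt (hA.1.eigenvalues i) - σ : ℝ) : ℂ))) := by
    refine Matrix.PosSemidef.diagonal fun i => ?_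
    rw [Pi.zero_apply, Complex.zero_le_real]
    linarith [hσ i]
  have := hd.mul_mul_conjTranspose_same U
  simpa [hU, Matrix.star_eq_conjTranspose] using this

theorem dist_polarFactor_of_same_range {n k : ℕ} (hkn : k ≤ n)
    (B P : Matrix (Fin n) (Fin k) ℂ) (hrank : B.rank = k) (hP : Pᴴ * P = 1)
    (hrange : LinearMap.range (Matrix.mulVecLin P) =
      LinearMap.range (Matrix.mulVecLin (polarFactor B))) :
    frobNorm (P - polarFactor B) ≤
      Real.sqrt (2 * (trNorm B - (Matrix.trace (Pᴴ * B)).re) / smin B) := by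
  rcases Nat.eq_zero_or_pos k with hk | hk
  · subst hk
    have h1 : frobNorm (P - polarFactor B) = 0 := by
      simp [frobNorm]
    have h2 : trNorm B = 0 := by simp [trNorm]
    have h3 : Matrix.trace (Pᴴ * B) = 0 := by
      simp [Matrix.trace]
    rw [h1, h2, h3]
    simp
  -- setup
  haveI : Nonempty (Fin k) := ⟨⟨0, hk⟩⟩
  set hpsd := Matrix.posSemidef_conjTranspose_mul_self B with hpsd_def
  set H : Matrix (Fin k) (Fin k) ℂ := psdSqrt hpsd with hH_def
  have hBB : (Bᴴ * B).PosDef := posDef_of_rank B hrank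
  have hHpsd : H.PosSemidef := psdSqrt_posSemidef hpsd
  have hHherm : Hᴴ = H := hHpsd.1
  have hHH : H * H = Bᴴ * B := psdSqrt_mul_self hpsd
  have hdet : IsUnit H.det := by
    have : H.det * H.det = (Bᴴ * B).det := by rw [← Matrix.det_mul, hHH]
    have hBBdet : IsUnit (Bᴴ * B).det := hBB.isUnit.map (Matrix.detMonoidHom)
    exact isUnit_of_mul_isUnit_left (this ▸ hBBdet)
  have hHinv : H⁻¹ * H = 1 := Matrix.nonsing_inv_mul H hdet
  have hHinv' : H * H⁻¹ = 1 := Matrix.mul_nonsing_inv H hdet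
  have hHinvherm : (H⁻¹)ᴴ = H⁻¹ := by
    rw [Matrix.conjTranspose_nonsing_inv, hHherm]
  set Ps : Matrix (Fin n) (Fin k) ℂ := polarFactor B with hPs_def
  have hPsB : Ps = B * H⁻¹ := rfl
  have hPst : Psᴴ * Ps = 1 := by
    rw [hPsB, Matrix.conjTranspose_mul, hHinvherm]
    calc H⁻¹ * Bᴴ * (B * H⁻¹) = H⁻¹ * (Bᴴ * B) * H⁻¹ := by
          simp only [Matrix.mul_assoc]
      _ = H⁻¹ * (H * H) * H⁻¹ := by rw [hHH]
      _ = (H⁻¹ * H) * (H * H⁻¹) := by simp only [Matrix.mul_assoc]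
      _ = 1 := by rw [hHinv, hHinv', Matrix.one_mul]
  have hPstB : Psᴴ * B = H := by
    rw [hPsB, Matrix.conjTranspose_mul, hHinvherm]
    calc H⁻¹ * Bᴴ * B = H⁻¹ * (H * H) := by rw [Matrix.mul_assoc, hHH]
      _ = (H⁻¹ * H) * H := by rw [Matrix.mul_assoc]
      _ = H := by rw [hHinv, Matrix.one_mul]
  -- Q P = P
  have hQP : Ps * Psᴴ * P = P := by
    ext i j
    have hcol : ∃ y, Ps *ᵥ y = P *ᵥ Pi.single j 1 := by
      have : P *ᵥ Pi.single j 1 ∈ LinearMap.range (Matrix.mulVecLin (polarFactor B)) := by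
        rw [← hrange]; exact ⟨Pi.single j 1, rfl⟩
      obtain ⟨y, hy⟩ := this
      exact ⟨y, hy⟩
    obtain ⟨y, hy⟩ := hcol
    have h1 : ∀ (M : Matrix (Fin n) (Fin k) ℂ), (M *ᵥ Pi.single j 1) i = M i j := by
      intro M
      rw [Matrix.mulVec_single]
      exact mul_one _
    have hPPP : Ps * Psᴴ * Ps = Ps := by
      rw [Matrix.mul_assoc, hPst, Matrix.mul_one]
    rw [← h1 (Ps * Psᴴ * P), ← h1 P, ← Matrix.mulVec_mulVec, ← hy,
      Matrix.mulVec_mulVec, hPPP]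
  set W : Matrix (Fin k) (Fin k) ℂ := Psᴴ * P with hW_def
  have hPW : Ps * W = P := by
    rw [hW_def, ← Matrix.mul_assoc, hQP]
  have hWu : Wᴴ * W = 1 := by
    rw [hW_def, Matrix.conjTranspose_mul, Matrix.conjTranspose_conjTranspose]
    calc Pᴴ * Ps * (Psᴴ * P) = Pᴴ * (Ps * Psᴴ * P) := by simp only [Matrix.mul_assoc]
      _ = Pᴴ * P := by rw [hQP]
      _ = 1 := hP
  -- trace identities
  have htrPB : Matrix.trace (Pᴴ * B) = Matrix.trace (Wᴴ * H) := by
    rw [← hPW, Matrix.conjTranspose_mul, Matrix.mul_assoc, hPstB]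
  have htrN : trNorm B = (Matrix.trace H).re := by
    rw [hH_def, trace_sqrt_eq hpsd, Complex.re_sum]
    simp only [Complex.ofReal_re]
    simp only [trNorm, sv, sortedDesc]
    exact sum_sortedDesc _
  -- sigma
  set σ : ℝ := smin B with hσ_def
  have hσpos : 0 < σ := smin_pos hk B (fun i => hBB.eigenvalues_pos i)
  have hσle : ∀ i, σ ≤ Real.sqrt (hpsd.1.eigenvalues i) := fun i => smin_le hk B i
  -- PSD of H - σ1
  have hHs : (H - (σ : ℂ) • 1).PosSemidef := sqrt_sub_smul_posSemidef hpsd hσle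
  -- key inequality
  set T : ℂ := Matrix.trace ((1 - Wᴴ) * (H - (σ : ℂ) • 1)) with hT_def
  have hTre : 0 ≤ T.re := by
    have hconj : (starRingEnd ℂ) T = Matrix.trace ((1 - W) * (H - (σ : ℂ) • 1)) := by
      have e1 : ((1 - Wᴴ) * (H - (σ : ℂ) • 1))ᴴ = (H - (σ : ℂ) • 1) * (1 - W) := by
        rw [Matrix.conjTranspose_mul]
        congr 1
        · rw [Matrix.conjTranspose_sub, hHherm]
          congr 1
          simp [Matrix.conjTranspose_smul, Complex.conj_ofReal]
        · rw [Matrix.conjTranspose_sub, Matrix.conjTranspose_one,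
            Matrix.conjTranspose_conjTranspose]
      calc (starRingEnd ℂ) T = star (Matrix.trace ((1 - Wᴴ) * (H - (σ : ℂ) • 1))) := rfl
        _ = Matrix.trace (((1 - Wᴴ) * (H - (σ : ℂ) • 1))ᴴ) := (Matrix.trace_conjTranspose _).symm
        _ = Matrix.trace ((H - (σ : ℂ) • 1) * (1 - W)) := by rw [e1]
        _ = Matrix.trace ((1 - W) * (H - (σ : ℂ) • 1)) := Matrix.trace_mul_comm _ _
    have hsum : T + (starRingEnd ℂ) T =
        Matrix.trace (((1 - W)ᴴ * (1 - W)) * (H - (σ : ℂ) • 1)) := by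
      rw [hT_def, hconj, ← Matrix.trace_add, ← Matrix.add_mul]
      congr 2
      rw [Matrix.conjTranspose_sub, Matrix.conjTranspose_one, Matrix.sub_mul,
        Matrix.one_mul, Matrix.mul_sub, Matrix.mul_one, hWu]
      abel
    have hpsd1 : ((1 - W)ᴴ * (1 - W)).PosSemidef :=
      Matrix.posSemidef_conjTranspose_mul_self _
    have h2 : 0 ≤ (T + (starRingEnd ℂ) T).re := by
      rw [hsum]
      exact trace_psd_mul_psd_re_nonneg hpsd1 hHs
    have : (T + (starRingEnd ℂ) T).re = 2 * T.re := by
      simp [Complex.add_re, Complex.conj_re]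
      ring
    linarith [this ▸ h2]
  -- compute T.re
  have hTre_eq : T.re = (Matrix.trace H).re - (Matrix.trace (Wᴴ * H)).re
      - σ * k + σ * (Matrix.trace W).re := by
    have hexp : (1 - Wᴴ) * (H - (σ : ℂ) • 1) =
        H - (σ : ℂ) • 1 - Wᴴ * H + (σ : ℂ) • Wᴴ := by
      rw [Matrix.sub_mul, Matrix.one_mul, Matrix.mul_sub, Matrix.mul_smul, Matrix.mul_one]
      abel
    rw [hT_def, hexp, Matrix.trace_add, Matrix.trace_sub, Matrix.trace_sub,
      Matrix.trace_smul, Matrix.trace_smul, Matrix.trace_one]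
    have htrWH : Matrix.trace Wᴴ = (starRingEnd ℂ) (Matrix.trace W) :=
      Matrix.trace_conjTranspose W
    simp [htrWH, Complex.smul_re, Complex.conj_re]
    ring
  -- compute frobNorm squared
  have hF2 : ∑ i, ∑ j, ‖(P - Ps) i j‖ ^ 2 =
      2 * k - 2 * (Matrix.trace W).re := by
    rw [← trace_cTc_re]
    have hdiff : P - Ps = Ps * (W - 1) := by
      rw [Matrix.mul_sub, hPW, Matrix.mul_one]
    rw [hdiff]
    have : (Ps * (W - 1))ᴴ * (Ps * (W - 1)) = (W - 1)ᴴ * (W - 1) := by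
      rw [Matrix.conjTranspose_mul]
      calc (W - 1)ᴴ * Psᴴ * (Ps * (W - 1)) = (W - 1)ᴴ * (Psᴴ * Ps) * (W - 1) := by
            simp only [Matrix.mul_assoc]
        _ = (W - 1)ᴴ * (W - 1) := by rw [hPst, Matrix.mul_one]
    rw [this]
    have hexp : (W - 1)ᴴ * (W - 1) = 1 - Wᴴ - W + 1 := by
      rw [Matrix.conjTranspose_sub, Matrix.conjTranspose_one, Matrix.sub_mul,
        Matrix.mul_sub, Matrix.mul_sub, hWu, Matrix.one_mul, Matrix.mul_one, Matrix.mul_one]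
      abel
    rw [hexp, Matrix.trace_add, Matrix.trace_sub, Matrix.trace_sub, Matrix.trace_one]
    have htrWH : Matrix.trace Wᴴ = (starRingEnd ℂ) (Matrix.trace W) :=
      Matrix.trace_conjTranspose W
    simp [htrWH, Complex.conj_re]
    ring
  -- final assembly
  set η : ℝ := trNorm B - (Matrix.trace (Pᴴ * B)).re with hη_def
  have hηeq : η = (Matrix.trace H).re - (Matrix.trace (Wᴴ * H)).re := by
    rw [hη_def, htrN, htrPB]
  have hkey : σ * (2 * k - 2 * (Matrix.trace W).re) ≤ 2 * η := by
    have := hTre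
    rw [hTre_eq] at this
    rw [hηeq]
    nlinarith [this]
  rw [frobNorm]
  apply Real.sqrt_le_sqrt
  rw [hF2, le_div_iff₀ hσpos]
  calc (2 * k - 2 * (Matrix.trace W).re) * σ = σ * (2 * k - 2 * (Matrix.trace W).re) := by ring
    _ ≤ 2 * η := hkey
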